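/- For n ≥ 2 and appropriate b, c, the polynomial identity ₂F₁(-n,b;c;z) = (1/n)(z - (c+n-1)/(b+n-1)) · d/dz[₂F₁(-n,b;c;z)] - ((b-c)(n-1))/(c(b+n-1)) · ₂F₁(-n+2, b; c+1; z) holds. -/

import Mathlib

open Finset Set

/-- Pochhammer symbol (rising factorial) `(a)_k` for real `a`. -/
noncomputable def poch (a : ℝ) (k : ℕ) : ℝ := (ascPochhammer ℝ k).eval a

/-- Terminating hypergeometric polynomial `₂F₁(-n, b; c; z)`. -/
noncomputable def hyp (n : ℕ) (b c z : ℝ) : ℝ :=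
  ∑ k ∈ Finset.range (n + 1),
    poch (-(n : ℝ)) k * poch b k / (poch c k * (k.factorial : ℝ)) * z ^ k

lemma poch_zero (a : ℝ) : poch a 0 = 1 := by simp [poch]

lemma poch_succ_right (a : ℝ) (k : ℕ) : poch a (k+1) = poch a k * (a + k) := by
  simp [poch, ascPochhammer_succ_right]

lemma poch_succ_left (a : ℝ) (k : ℕ) : poch a (k+1) = a * poch (a+1) k := by
  simp [poch, ascPochhammer_succ_left, Polynomial.eval_comp]

lemma poch_neg_nat (m k : ℕ) (h : m < k) : poch (-(m:ℝ)) k = 0 := by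
  induction k with
  | zero => omega
  | succ k ih =>
    rw [poch_succ_right]
    rcases Nat.lt_succ_iff_lt_or_eq.mp h with h | h
    · rw [ih h]; ring
    · subst h; simp

lemma poch_ne_zero (c : ℝ) (k : ℕ) (h : ∀ j : ℕ, j < k → c + j ≠ 0) : poch c k ≠ 0 := by
  induction k with
  | zero => simp [poch_zero]
  | succ k ih =>
    rw [poch_succ_right]
    exact mul_ne_zero (ih fun j hj => h j (Nat.lt_succ_of_lt hj)) (h k (Nat.lt_succ_self k))

lemma poch_shift1 (c : ℝ) (k : ℕ) : poch (c+1) k * c = poch c k * (c + k) := by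
  have h1 := poch_succ_left c k
  have h2 := poch_succ_right c k
  rw [h2] at h1
  linarith [h1]

lemma poch_shift2 (a : ℝ) (k : ℕ) :
    poch (a+2) k * (a * (a+1)) = poch a k * ((a+k) * (a+k+1)) := by
  have h1 : poch a (k+2) = a * ((a+1) * poch (a+1+1) k) := by
    rw [poch_succ_left, poch_succ_left]
  have h2 : poch a (k+1+1) = poch a k * (a+k) * (a + (k+1)) := by
    rw [poch_succ_right, poch_succ_right]; push_cast; ring
  have h3 : a+1+1 = a+2 := by ring
  rw [h3] at h1
  rw [h1] at h2
  linarith [h2]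

theorem stmt_6 (n : ℕ) (hn : 2 ≤ n) (b c : ℝ)
    (hc : ∀ j : ℕ, j < n → c ≠ -(j : ℝ)) (hb : b + n - 1 ≠ 0) (z : ℝ) :
    hyp n b c z =
      (1 / (n : ℝ)) * (z - (c + n - 1) / (b + n - 1)) * deriv (fun t => hyp n b c t) z
        - (b - c) * (n - 1) / (c * (b + n - 1)) * hyp (n - 2) b (c + 1) z := by
  have hn0 : (n:ℝ) ≠ 0 := by positivity
  have hn1 : (n:ℝ) - 1 ≠ 0 := by
    have : (2:ℝ) ≤ n := by exact_mod_cast hn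
    linarith
  have hc0 : c ≠ 0 := by have := hc 0 (by omega); simpa using this
  set A : ℕ → ℝ := fun k => poch (-(n:ℝ)) k * poch b k / (poch c k * (k.factorial : ℝ)) with hA
  set A' : ℕ → ℝ := fun k =>
    poch (-((n-2 : ℕ):ℝ)) k * poch b k / (poch (c+1) k * (k.factorial : ℝ)) with hA'
  have hA0 : ∀ k, n < k → A k = 0 := by
    intro k hk; simp [hA, poch_neg_nat n k hk]
  have hA'0 : ∀ k, n - 2 < k → A' k = 0 := by
    intro k hk; simp [hA', poch_neg_nat (n-2) k hk]
  -- derivative computation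
  have hderiv : deriv (fun t => hyp n b c t) z
      = ∑ k ∈ Finset.range (n+1), A k * ((k:ℝ) * z ^ (k-1)) := by
    have : (fun t => hyp n b c t) = fun t => ∑ k ∈ Finset.range (n+1), A k * t ^ k := by
      funext t; simp [hyp, hA]
    rw [this, deriv_fun_sum]
    · refine Finset.sum_congr rfl fun k _ => ?_
      rw [deriv_const_mul_field, deriv_pow_field]
    · intro k _
      exact ((differentiable_pow k).const_mul _).differentiableAt
  set E : ℝ := (c + n - 1) / (b + n - 1) with hE
  set D : ℝ := (b - c) * ((n:ℝ) - 1) / (c * (b + n - 1)) with hD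
  set S1 : ℝ := ∑ k ∈ Finset.range (n+1), A k * ((k:ℝ) * z ^ (k-1)) with hS1
  have e1 : S1 = ∑ k ∈ Finset.range n, A (k+1) * (((k:ℝ)+1) * z ^ k) := by
    rw [hS1, Finset.sum_range_succ']
    push_cast
    simp
  have e1' : S1 = ∑ k ∈ Finset.range (n+1), A (k+1) * (((k:ℝ)+1) * z ^ k) := by
    rw [e1, Finset.sum_range_succ, hA0 (n+1) (by omega)]
    ring
  have hzS1 : z * S1 = ∑ k ∈ Finset.range (n+1), A k * ((k:ℝ) * z ^ k) := by
    rw [e1, Finset.mul_sum, Finset.sum_range_succ']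
    push_cast
    simp only [Nat.cast_zero, zero_mul, mul_zero, add_zero, pow_zero]
    refine Finset.sum_congr rfl fun k _ => ?_
    ring
  have e2 : hyp (n-2) b (c+1) z = ∑ k ∈ Finset.range (n+1), A' k * z ^ k := by
    rw [hyp]
    refine Finset.sum_subset (Finset.range_subset_range.2 (by omega)) ?_
    intro k _ hk
    simp only [Finset.mem_range, not_lt] at hk
    rw [show poch (-((n-2:ℕ):ℝ)) k * poch b k / (poch (c+1) k * (k.factorial : ℝ)) * z ^ k
        = A' k * z ^ k from rfl, hA'0 k (by omega), zero_mul]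
  -- termwise identity
  have key : ∀ k ∈ Finset.range (n+1),
      A k * z ^ k = (1/(n:ℝ)) * (A k * ((k:ℝ) * z ^ k))
        - ((1/(n:ℝ)) * E) * (A (k+1) * (((k:ℝ)+1) * z ^ k)) - D * (A' k * z ^ k) := by
    intro k hk
    rw [Finset.mem_range] at hk
    rcases eq_or_lt_of_le (Nat.lt_succ_iff.mp hk) with rfl | hkn
    · rw [hA0 (k+1) (by omega), hA'0 k (by omega)]
      field_simp
      ring
    · -- k < n
      have hck : c + (k:ℝ) ≠ 0 := by
        have := hc k hkn
        intro h; apply this; linarith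
      have hR : poch c k ≠ 0 := by
        refine poch_ne_zero c k fun j hj => ?_
        have := hc j (by omega)
        intro h; apply this; linarith
      have hF : (k.factorial : ℝ) ≠ 0 := by positivity
      have hk1 : ((k:ℝ) + 1) ≠ 0 := by positivity
      have hcast : ((n - 2 : ℕ) : ℝ) = (n:ℝ) - 2 := by
        have := Nat.cast_sub (R := ℝ) hn
        simpa using this
      have hneg : -(((n-2:ℕ)):ℝ) = (-(n:ℝ)) + 2 := by rw [hcast]; ring
      have eX : poch (c+1) k * c = poch c k * (c + k) := poch_shift1 c k
      have eY : poch ((-(n:ℝ)) + 2) k * ((n:ℝ) * ((n:ℝ) - 1))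
          = poch (-(n:ℝ)) k * (((k:ℝ) - n) * ((k:ℝ) + 1 - n)) := by
        have := poch_shift2 (-(n:ℝ)) k
        nlinarith [this]
      have hXv : poch (c+1) k = poch c k * (c + k) / c := by
        rw [eq_div_iff hc0]; exact eX
      have hYv : poch ((-(n:ℝ)) + 2) k
          = poch (-(n:ℝ)) k * (((k:ℝ) - n) * ((k:ℝ) + 1 - n)) / ((n:ℝ) * ((n:ℝ) - 1)) := by
        rw [eq_div_iff (mul_ne_zero hn0 hn1)]; exact eY
      simp only [hA, hA', hE, hD, hneg, hXv, hYv,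
        poch_succ_right, Nat.factorial_succ, Nat.cast_mul]
      push_cast
      field_simp
      ring
  calc hyp n b c z = ∑ k ∈ Finset.range (n+1), A k * z ^ k := by simp [hyp, hA]
    _ = ∑ k ∈ Finset.range (n+1), ((1/(n:ℝ)) * (A k * ((k:ℝ) * z ^ k))
        - ((1/(n:ℝ)) * E) * (A (k+1) * (((k:ℝ)+1) * z ^ k)) - D * (A' k * z ^ k)) :=
      Finset.sum_congr rfl key
    _ = (1/(n:ℝ)) * (z * S1) - ((1/(n:ℝ)) * E) * S1 - D * (hyp (n-2) b (c+1) z) := by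
      rw [hzS1, e1', e2, Finset.mul_sum, Finset.mul_sum, Finset.mul_sum,
        ← Finset.sum_sub_distrib, ← Finset.sum_sub_distrib]
    _ = (1 / (n : ℝ)) * (z - E) * S1 - D * hyp (n-2) b (c+1) z := by ring
    _ = _ := by rw [hderiv]
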